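/- The pseudo-determinant of M = Q g Q satisfies pdet(Q g Q) = det(g) · det(J g⁻¹ Jᵀ) / det(J Jᵀ). Equivalently, log pdet(M) = log det g + log det(J g⁻¹ Jᵀ) − log det(J Jᵀ). -/

import Mathlib

open Matrix

/-- The pseudo-determinant of a real symmetric matrix: the product of its nonzero
eigenvalues (counted with multiplicity), the empty product being `1`. -/
noncomputable def pdet {n : ℕ} {S : Matrix (Fin n) (Fin n) ℝ} (hS : S.IsHermitian) : ℝ :=
  ∏ i, if hS.eigenvalues i = 0 then 1 else hS.eigenvalues i

/-- If `P` is a symmetric idempotent with `P * S = S` and `ker S ⊆ ker P`, then the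
pseudo-determinant of `S` equals `det (S + (1 - P))`. -/
lemma pdet_eq_det_add {n : ℕ} {S P : Matrix (Fin n) (Fin n) ℝ} (hS : S.IsHermitian)
    (hPS : P * S = S)
    (hker : ∀ u : Fin n → ℝ, S *ᵥ u = 0 → P *ᵥ u = 0) :
    pdet hS = (S + (1 - P)).det := by
  classical
  set U : Matrix (Fin n) (Fin n) ℝ := (hS.eigenvectorUnitary : Matrix (Fin n) (Fin n) ℝ)
    with hU
  set ev := hS.eigenvalues with hev
  have hUU : star U * U = 1 := Matrix.mem_unitaryGroup_iff'.mp hS.eigenvectorUnitary.2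
  have hUU' : U * star U = 1 := Matrix.mem_unitaryGroup_iff.mp hS.eigenvectorUnitary.2
  have hspec : S = U * Matrix.diagonal ev * star U := by
    have h := hS.spectral_theorem
    rw [RCLike.ofReal_real_eq_id] at h
    simpa using h
  have hSU : S * U = U * Matrix.diagonal ev := by
    rw [hspec]
    simp only [Matrix.mul_assoc, hUU, Matrix.mul_one]
  have hQS : (1 - P) * S = 0 := by
    rw [Matrix.sub_mul, Matrix.one_mul, hPS, sub_self]
  -- columns of U with zero eigenvalue are killed by P
  have hcol : ∀ j, ev j = 0 → P *ᵥ (fun i => U i j) = 0 := by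
    intro j hj
    apply hker
    funext i
    have h2 : (S * U) i j = (U * Matrix.diagonal ev) i j := by rw [hSU]
    rw [Matrix.mul_diagonal, hj, mul_zero] at h2
    have h3 : (S *ᵥ fun k => U k j) i = (S * U) i j := by
      simp [Matrix.mulVec, Matrix.mul_apply, dotProduct]
    rw [h3, h2]
    rfl
  -- star U * (1 - P) * U is the indicator diagonal
  have hB : star U * ((1 - P) * U)
      = Matrix.diagonal (fun i => if ev i = 0 then (1:ℝ) else 0) := by
    have hBD : (star U * ((1 - P) * U)) * Matrix.diagonal ev = 0 := by
      have h1 : ((1 - P) * U) * Matrix.diagonal ev = (1 - P) * (S * U) := by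
        rw [hSU, Matrix.mul_assoc]
      rw [Matrix.mul_assoc, h1, ← Matrix.mul_assoc (1 - P) S U, hQS, Matrix.zero_mul,
        Matrix.mul_zero]
    ext i j
    by_cases hj : ev j = 0
    · have hQU : ∀ k, (P * U) k j = 0 := by
        intro k
        have := congrFun (hcol j hj) k
        simpa [Matrix.mulVec, Matrix.mul_apply, dotProduct] using this
      have e1 : ∀ k, ((1 - P) * U) k j = U k j := by
        intro k
        rw [Matrix.sub_mul, Matrix.one_mul, Matrix.sub_apply, hQU k, sub_zero]
      rw [Matrix.mul_apply]
      simp only [e1]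
      rw [← Matrix.mul_apply, hUU]
      rcases eq_or_ne i j with rfl | h
      · simp [hj]
      · simp [Matrix.one_apply, Matrix.diagonal_apply, h]
    · have h0 : (star U * ((1 - P) * U)) i j * ev j = 0 := by
        have := congrFun (congrFun hBD i) j
        simpa [Matrix.mul_diagonal] using this
      have hz : (star U * ((1 - P) * U)) i j = 0 :=
        (mul_eq_zero.mp h0).resolve_right hj
      rw [hz]
      rcases eq_or_ne i j with rfl | h
      · simp [Matrix.diagonal_apply, hj]
      · simp [Matrix.diagonal_apply, h]
  have h1Q : (1 : Matrix (Fin n) (Fin n) ℝ) - P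
      = U * Matrix.diagonal (fun i => if ev i = 0 then (1:ℝ) else 0) * star U := by
    rw [← hB]
    calc (1 : Matrix (Fin n) (Fin n) ℝ) - P
        = (U * star U) * ((1 - P) * (U * star U)) := by
          rw [hUU', Matrix.mul_one, Matrix.one_mul]
      _ = U * (star U * ((1 - P) * U)) * star U := by
          simp only [Matrix.mul_assoc]
  have hsum : S + (1 - P)
      = U * Matrix.diagonal (fun i => ev i + if ev i = 0 then (1:ℝ) else 0) * star U := by
    rw [hspec, h1Q, ← Matrix.add_mul, ← Matrix.mul_add, Matrix.diagonal_add]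
  have hUdet : U.det * (star U).det = 1 := by
    rw [← Matrix.det_mul, hUU', Matrix.det_one]
  have hdet1 : (S + (1 - P)).det
      = ∏ i, (ev i + if ev i = 0 then (1:ℝ) else 0) := by
    rw [hsum, Matrix.det_mul, Matrix.det_mul, Matrix.det_diagonal]
    calc U.det * (∏ i, (ev i + if ev i = 0 then (1:ℝ) else 0)) * (star U).det
        = (U.det * (star U).det) * ∏ i, (ev i + if ev i = 0 then (1:ℝ) else 0) := by ring
      _ = ∏ i, (ev i + if ev i = 0 then (1:ℝ) else 0) := by rw [hUdet, one_mul]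
  rw [hdet1]
  unfold pdet
  apply Finset.prod_congr rfl
  intro i _
  by_cases h : ev i = 0 <;> simp [← hev, h]

/-- `pdet (Q g Q) = det g · det (J g⁻¹ Jᵀ) / det (J Jᵀ)`; equivalently,
`log pdet (Q g Q) = log det g + log det (J g⁻¹ Jᵀ) − log det (J Jᵀ)`. -/
theorem pdet_QgQ {n m : ℕ} (hm : 0 < m) (hmn : m < n)
    (J : Matrix (Fin m) (Fin n) ℝ) (hJ : J.rank = m)
    (g : Matrix (Fin n) (Fin n) ℝ) (hg : g.PosDef)
    (hJJ : IsUnit (J * Jᵀ).det) (hJgJ : IsUnit (J * g⁻¹ * Jᵀ).det)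
    (Q : Matrix (Fin n) (Fin n) ℝ)
    (hQ : Q = 1 - Jᵀ * (J * Jᵀ)⁻¹ * J)
    (hM : (Q * g * Q).IsHermitian) :
    pdet hM = g.det * (J * g⁻¹ * Jᵀ).det / (J * Jᵀ).det ∧
      Real.log (pdet hM) =
        Real.log g.det + Real.log (J * g⁻¹ * Jᵀ).det - Real.log (J * Jᵀ).det := by
  classical
  have hgd : IsUnit g.det := hg.det_pos.ne'.isUnit
  have hgg : g * g⁻¹ = 1 := Matrix.mul_nonsing_inv g hgd
  set R : Matrix (Fin n) (Fin m) ℝ := Jᵀ * (J * Jᵀ)⁻¹ with hR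
  have hQ' : Q = 1 - R * J := by rw [hQ, hR, Matrix.mul_assoc]
  have hJR : J * R = 1 := by
    rw [hR, ← Matrix.mul_assoc, Matrix.mul_nonsing_inv _ hJJ]
  have hRJ : (R * J) * (R * J) = R * J := by
    rw [Matrix.mul_assoc, ← Matrix.mul_assoc J R J, hJR, Matrix.one_mul]
  have hQQ : Q * Q = Q := by
    rw [hQ']
    simp only [Matrix.sub_mul, Matrix.mul_sub, Matrix.one_mul, Matrix.mul_one, hRJ]
    abel
  have hQT : Qᵀ = Q := by
    rw [hQ', hR]
    simp only [Matrix.transpose_sub, Matrix.transpose_one, Matrix.transpose_mul,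
      Matrix.transpose_nonsing_inv, Matrix.transpose_transpose, Matrix.mul_assoc]
  have hPS : Q * (Q * g * Q) = Q * g * Q := by
    rw [← Matrix.mul_assoc, ← Matrix.mul_assoc, hQQ]
  have hker : ∀ u : Fin n → ℝ, (Q * g * Q) *ᵥ u = 0 → Q *ᵥ u = 0 := by
    intro u hu
    by_contra hv
    have hpos := (Matrix.posDef_iff_dotProduct_mulVec.mp hg).2 hv
    have hstar : star (Q *ᵥ u) = Q *ᵥ u := by simp
    have hval : (Q *ᵥ u) ⬝ᵥ (g *ᵥ (Q *ᵥ u)) = u ⬝ᵥ ((Q * g * Q) *ᵥ u) := by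
      rw [← Matrix.mulVec_mulVec, ← Matrix.mulVec_mulVec, dotProduct_mulVec u Q,
        ← Matrix.mulVec_transpose, hQT]
    rw [hu, dotProduct_zero] at hval
    rw [hstar, hval] at hpos
    exact lt_irrefl 0 hpos
  have hpdet : pdet hM = (Q * g * Q + (1 - Q)).det := pdet_eq_det_add hM hPS hker
  -- algebraic computation of the determinant
  have hstep : Q * g * Q + (1 - Q) = 1 + (Q * (g - 1)) * Q := by
    rw [Matrix.mul_sub, Matrix.mul_one, Matrix.sub_mul, hQQ]
    abel
  have hd2 : (1 + (Q * (g - 1)) * Q).det = (1 + Q * (g - 1)).det := by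
    rw [Matrix.det_one_add_mul_comm, ← Matrix.mul_assoc, hQQ]
  have hd3 : (1 + Q * (g - 1)).det = (1 + (g - 1) * Q).det :=
    Matrix.det_one_add_mul_comm Q (g - 1)
  have hfac : 1 + (g - 1) * Q = g * (1 + (g⁻¹ * R - R) * J) := by
    rw [hQ']
    simp only [Matrix.mul_add, Matrix.add_mul, Matrix.mul_sub, Matrix.sub_mul,
      Matrix.mul_one, Matrix.one_mul, ← Matrix.mul_assoc, hgg]
    abel
  have hd5 : 1 + J * (g⁻¹ * R - R) = (J * g⁻¹ * Jᵀ) * (J * Jᵀ)⁻¹ := by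
    rw [Matrix.mul_sub, hJR, ← Matrix.mul_assoc, hR, ← Matrix.mul_assoc]
    abel
  have hinvdet : (J * Jᵀ)⁻¹.det = ((J * Jᵀ).det)⁻¹ := by
    have h1 : (J * Jᵀ)⁻¹.det * (J * Jᵀ).det = 1 := by
      rw [← Matrix.det_mul, Matrix.nonsing_inv_mul _ hJJ, Matrix.det_one]
    exact eq_inv_of_mul_eq_one_left h1
  have hmain : pdet hM = g.det * (J * g⁻¹ * Jᵀ).det / (J * Jᵀ).det := by
    rw [hpdet, hstep, hd2, hd3, hfac, Matrix.det_mul, Matrix.det_one_add_mul_comm, hd5,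
      Matrix.det_mul, hinvdet]
    ring
  refine ⟨hmain, ?_⟩
  rw [hmain, Real.log_div (mul_ne_zero hgd.ne_zero hJgJ.ne_zero) hJJ.ne_zero,
    Real.log_mul hgd.ne_zero hJgJ.ne_zero]
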